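/- Assume (E1), (E3), and the locality assumption (LOC). Then the pair (A, B) is jointly independent of λ; that is, for every x ∈ {a, a′} and y ∈ {b, b′}, P({A = x} ∩ {B = y} | σ(λ)) = P(A = x)·P(B = y) almost surely. -/

import Mathlib

open MeasureTheory ProbabilityTheory

/-- Conditional probability of the event `E` given the sub-σ-algebra `m`:
the conditional expectation of the indicator function of `E`. -/
noncomputable def cprob {Ω : Type*} [MeasurableSpace Ω] (P : Measure Ω)
    (m : MeasurableSpace Ω) (E : Set Ω) : Ω → ℝ :=
  P[E.indicator (fun _ => (1 : ℝ)) | m]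

/-- under (E1), (E3) and locality (LOC), the pair `(A, B)` is jointly
independent of `λ`: for every setting values `x, y`,
`P({A = x} ∩ {B = y} | σ(λ)) = P(A = x)·P(B = y)` almost surely.
Settings `a, a′` are modelled by `true, false : Bool` (likewise `b, b′`). -/
theorem stmt13 {Ω : Type*} [MeasurableSpace Ω] (P : Measure Ω) [IsProbabilityMeasure P]
    {Λ : Type*} [MeasurableSpace Λ] (lam : Ω → Λ) (hlam : Measurable lam)
    (A B : Ω → Bool) (hA : Measurable A) (hB : Measurable B)
    (D1 D2 : Ω → ℝ) (hD1 : Measurable D1) (hD2 : Measurable D2)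
    (hD1v : ∀ ω, D1 ω = 1 ∨ D1 ω = -1) (hD2v : ∀ ω, D2 ω = 1 ∨ D2 ω = -1)
    (hE1 : IndepFun A B P)
    (hE3 : IndepFun A lam P ∧ IndepFun B lam P)
    (hLOC : ∀ E1 E2 : Set Ω,
      MeasurableSet[MeasurableSpace.comap (fun ω => (D1 ω, A ω)) inferInstance] E1 →
      MeasurableSet[MeasurableSpace.comap (fun ω => (D2 ω, B ω)) inferInstance] E2 →
      cprob P (MeasurableSpace.comap lam inferInstance) (E1 ∩ E2) =ᵐ[P]
        fun ω => cprob P (MeasurableSpace.comap lam inferInstance) E1 ω *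
          cprob P (MeasurableSpace.comap lam inferInstance) E2 ω) :
    ∀ x y : Bool,
      cprob P (MeasurableSpace.comap lam inferInstance) ({ω | A ω = x} ∩ {ω | B ω = y})
        =ᵐ[P] fun _ => (P {ω | A ω = x}).toReal * (P {ω | B ω = y}).toReal := by
  intro x y
  have hle : MeasurableSpace.comap lam inferInstance ≤ ‹MeasurableSpace Ω› := hlam.comap_le
  have hE1m : MeasurableSet[MeasurableSpace.comap (fun ω => (D1 ω, A ω)) inferInstance]
      {ω | A ω = x} := by
    refine ⟨Set.univ ×ˢ {x}, MeasurableSet.univ.prod (measurableSet_singleton x), ?_⟩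
    ext ω; simp [eq_comm]
  have hE2m : MeasurableSet[MeasurableSpace.comap (fun ω => (D2 ω, B ω)) inferInstance]
      {ω | B ω = y} := by
    refine ⟨Set.univ ×ˢ {y}, MeasurableSet.univ.prod (measurableSet_singleton y), ?_⟩
    ext ω; simp [eq_comm]
  have hloc := hLOC _ _ hE1m hE2m
  have hconst : ∀ (C : Ω → Bool), Measurable C → IndepFun C lam P → ∀ z : Bool,
      cprob P (MeasurableSpace.comap lam inferInstance) {ω | C ω = z}
        =ᵐ[P] fun _ => (P {ω | C ω = z}).toReal := by
    intro C hC hCind z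
    have hsm : StronglyMeasurable[MeasurableSpace.comap C inferInstance]
        (({ω | C ω = z}).indicator (fun _ => (1 : ℝ))) := by
      refine stronglyMeasurable_const.indicator ?_
      exact ⟨{z}, measurableSet_singleton z, by ext ω; simp [eq_comm]⟩
    have hindep : ProbabilityTheory.Indep
        (MeasurableSpace.comap C inferInstance) (MeasurableSpace.comap lam inferInstance) P :=
      (ProbabilityTheory.IndepFun_iff_Indep C lam P).mp hCind
    have h := MeasureTheory.condExp_indep_eq (μ := P) (hC.comap_le) hle hsm hindep
    have hms : MeasurableSet {ω | C ω = z} := hC (measurableSet_singleton z)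
    have hint : ∫ ω, ({ω | C ω = z}).indicator (fun _ => (1 : ℝ)) ω ∂P
        = (P {ω | C ω = z}).toReal := by
      rw [integral_indicator hms]
      simp [Measure.real]
    unfold cprob
    refine h.trans ?_
    rw [hint]
  have hAx := hconst A hA hE3.1 x
  have hBy := hconst B hB hE3.2 y
  filter_upwards [hloc, hAx, hBy] with ω h1 h2 h3
  rw [h1, h2, h3]
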